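/- arXiv:2001.06694 — 3 statements merged into one kernel-verified Lean document; each statement's English description precedes it below -/
import Mathlib

section
/- Let F : C ⇄ D : G be an adjunction between model categories. Then G is a right Quillen functor if and only if G preserves fibrations between fibrant objects and preserves all acyclic fibrations. -/
open CategoryTheory CategoryTheory.Limits

universe v u

/-- A class of morphisms is closed under retracts if whenever `f` is a retract of
`g` (in the arrow category) and `g` lies in the class, so does `f`. -/
def RetractClosed {C : Type u} [Category.{v} C] (P : MorphismProperty C) : Prop :=
  ∀ {X Y X' Y' : C} (f : X ⟶ Y) (g : X' ⟶ Y')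
    (iX : X ⟶ X') (rX : X' ⟶ X) (iY : Y ⟶ Y') (rY : Y' ⟶ Y),
    iX ≫ rX = 𝟙 X → iY ≫ rY = 𝟙 Y → iX ≫ g = f ≫ iY → g ≫ rY = rX ≫ f →
    P g → P f

/-- A (Quillen) model structure on a category `C`: classes of weak equivalences,
cofibrations and fibrations satisfying the two-out-of-three, retract, lifting and
factorization axioms. -/
structure ModelStruct (C : Type u) [Category.{v} C] where
  W : MorphismProperty C
  Cof : MorphismProperty C
  Fib : MorphismProperty C
  w_id : ∀ X : C, W (𝟙 X)
  cof_id : ∀ X : C, Cof (𝟙 X)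
  fib_id : ∀ X : C, Fib (𝟙 X)
  w_comp : ∀ {X Y Z : C} (f : X ⟶ Y) (g : Y ⟶ Z), W f → W g → W (f ≫ g)
  w_cancel_left : ∀ {X Y Z : C} (f : X ⟶ Y) (g : Y ⟶ Z), W f → W (f ≫ g) → W g
  w_cancel_right : ∀ {X Y Z : C} (f : X ⟶ Y) (g : Y ⟶ Z), W g → W (f ≫ g) → W f
  w_retract : RetractClosed W
  cof_retract : RetractClosed Cof
  fib_retract : RetractClosed Fib
  lift_cof_trivFib : ∀ {A B X Y : C} (i : A ⟶ B) (p : X ⟶ Y),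
    Cof i → Fib p → W p → HasLiftingProperty i p
  lift_trivCof_fib : ∀ {A B X Y : C} (i : A ⟶ B) (p : X ⟶ Y),
    Cof i → W i → Fib p → HasLiftingProperty i p
  fact₁ : ∀ {X Y : C} (f : X ⟶ Y), ∃ (Z : C) (i : X ⟶ Z) (p : Z ⟶ Y),
    Cof i ∧ W p ∧ Fib p ∧ i ≫ p = f
  fact₂ : ∀ {X Y : C} (f : X ⟶ Y), ∃ (Z : C) (i : X ⟶ Z) (p : Z ⟶ Y),
    Cof i ∧ W i ∧ Fib p ∧ i ≫ p = f

namespace ModelStruct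

variable {C : Type u} [Category.{v} C] (M : ModelStruct C)

/-- An object is fibrant if the map to the terminal object is a fibration. -/
def Fibrant [HasTerminal C] (X : C) : Prop := M.Fib (terminal.from X)

/-- An object is cofibrant if the map from the initial object is a cofibration. -/
def Cofibrant [HasInitial C] (X : C) : Prop := M.Cof (initial.to X)

end ModelStruct


section Aux

variable {C : Type u} [Category.{v} C]

/-- A map with the right lifting property against all trivial cofibrations is a
fibration (retract argument). -/
lemma fib_of_rlp (M : ModelStruct C) {X Y : C} (p : X ⟶ Y)
    (h : ∀ {A B : C} (i : A ⟶ B), M.Cof i → M.W i → HasLiftingProperty i p) :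
    M.Fib p := by
  obtain ⟨Z, a, b, ha, haw, hb, hab⟩ := M.fact₂ p
  haveI := h a ha haw
  have sq : CommSq (𝟙 X) a p b := ⟨by simp [hab]⟩
  exact M.fib_retract p b a sq.lift (𝟙 Y) (𝟙 Y)
    sq.fac_left (by simp) (by simp [hab]) (by simp [sq.fac_right]) hb

/-- A map with the left lifting property against all trivial fibrations is a
cofibration (retract argument). -/
lemma cof_of_llp (M : ModelStruct C) {A B : C} (i : A ⟶ B)
    (h : ∀ {X Y : C} (p : X ⟶ Y), M.Fib p → M.W p → HasLiftingProperty i p) :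
    M.Cof i := by
  obtain ⟨Z, a, b, ha, hbw, hb, hab⟩ := M.fact₁ i
  haveI := h b hb hbw
  have sq : CommSq a i b (𝟙 B) := ⟨by simp [hab]⟩
  exact M.cof_retract i a (𝟙 A) (𝟙 A) sq.lift b
    (by simp) sq.fac_right (by simp [sq.fac_left]) (by simp [hab]) ha

/-- Fibrations are closed under composition. -/
lemma fib_comp (M : ModelStruct C) {X Y Z : C} (f : X ⟶ Y) (g : Y ⟶ Z)
    (hf : M.Fib f) (hg : M.Fib g) : M.Fib (f ≫ g) := by
  refine fib_of_rlp M _ (fun i hi hiw => ?_)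
  haveI := M.lift_trivCof_fib i f hi hiw hf
  haveI := M.lift_trivCof_fib i g hi hiw hg
  infer_instance

end Aux

/-- **Dugger's criterion for right Quillen functors.**
Let `F ⊣ G` be an adjunction between model categories `C` and `D`.  Then `G` is a
right Quillen functor (preserves fibrations and acyclic fibrations) if and only if
`G` preserves fibrations between fibrant objects and preserves all acyclic
fibrations. -/
theorem dugger_right_quillen_criterion
    {C : Type u} [Category.{v} C] {D : Type u} [Category.{v} D]
    [HasTerminal C] [HasTerminal D] [HasInitial C] [HasInitial D]
    (MC : ModelStruct C) (MD : ModelStruct D)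
    (F : C ⥤ D) (G : D ⥤ C) (adj : F ⊣ G) :
    ((∀ {X Y : D} (p : X ⟶ Y), MD.Fib p → MC.Fib (G.map p)) ∧
      (∀ {X Y : D} (p : X ⟶ Y), MD.Fib p → MD.W p → MC.Fib (G.map p) ∧ MC.W (G.map p)))
    ↔
    ((∀ {X Y : D} (p : X ⟶ Y), MD.Fibrant X → MD.Fibrant Y → MD.Fib p →
        MC.Fib (G.map p)) ∧
      (∀ {X Y : D} (p : X ⟶ Y), MD.Fib p → MD.W p → MC.Fib (G.map p) ∧ MC.W (G.map p))) := by
  constructor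
  · rintro ⟨h1, h2⟩
    exact ⟨fun p _ _ hp => h1 p hp, h2⟩
  · rintro ⟨h1, h2⟩
    refine ⟨fun {X Y} p hp => ?_, h2⟩
    -- Step 1: F preserves cofibrations.
    have hFcof : ∀ {A B : C} (i : A ⟶ B), MC.Cof i → MD.Cof (F.map i) := by
      intro A B i hi
      refine cof_of_llp MD _ (fun q hq hqw => ?_)
      rw [adj.hasLiftingProperty_iff]
      exact MC.lift_cof_trivFib i (G.map q) hi (h2 q hq hqw).1 (h2 q hq hqw).2
    -- Step 2: F preserves trivial cofibrations.
    have hFtcof : ∀ {A B : C} (i : A ⟶ B), MC.Cof i → MC.W i →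
        MD.Cof (F.map i) ∧ MD.W (F.map i) := by
      intro A B i hi hiw
      refine ⟨hFcof i hi, ?_⟩
      -- fibrant replacement of F.obj B
      obtain ⟨R, r, tR, hr, hrw, htR, hrtR⟩ := MD.fact₂ (terminal.from (F.obj B))
      have hRfib : MD.Fib (terminal.from R) := by
        have : tR = terminal.from R := Subsingleton.elim _ _
        rwa [this] at htR
      -- factor F.map i ≫ r as trivial cofibration followed by fibration
      obtain ⟨Z, j, q, hj, hjw, hq, hjq⟩ := MD.fact₂ (F.map i ≫ r)
      have hZfib : MD.Fib (terminal.from Z) := by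
        have : terminal.from Z = q ≫ terminal.from R := Subsingleton.elim _ _
        rw [this]
        exact fib_comp MD q _ hq hRfib
      -- q is a fibration between fibrant objects, so G.map q is a fibration
      have hGq : MC.Fib (G.map q) := h1 q hZfib hRfib hq
      -- F.map i lifts against q (by adjunction), r lifts against q
      haveI : HasLiftingProperty (F.map i) q := by
        rw [adj.hasLiftingProperty_iff]
        exact MC.lift_trivCof_fib i (G.map q) hi hiw hGq
      haveI : HasLiftingProperty r q := MD.lift_trivCof_fib r q hr hrw hq
      haveI : HasLiftingProperty (F.map i ≫ r) q := inferInstance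
      have sq : CommSq j (F.map i ≫ r) q (𝟙 R) := ⟨by simp [hjq]⟩
      -- F.map i ≫ r is a retract of the trivial cofibration j, hence a weq
      have hd : MD.W (F.map i ≫ r) :=
        MD.w_retract (F.map i ≫ r) j (𝟙 _) (𝟙 _) sq.lift q
          (by simp) sq.fac_right (by simp [sq.fac_left]) (by simp [hjq]) hjw
      -- cancel r
      exact MD.w_cancel_right (F.map i) r hrw hd
    -- Step 3: G preserves all fibrations.
    refine fib_of_rlp MC _ (fun i hi hiw => ?_)
    rw [← adj.hasLiftingProperty_iff]
    obtain ⟨hc, hw⟩ := hFtcof i hi hiw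
    exact MD.lift_trivCof_fib (F.map i) p hc hw hp
end

section
/- Ken Brown's lemma: let F : C → D be a functor between a model category C and a category D equipped with a class of weak equivalences satisfying two-out-of-three. If F sends acyclic cofibrations between cofibrant objects to weak equivalences, then F sends all weak equivalences between cofibrant objects to weak equivalences. -/
open CategoryTheory CategoryTheory.Limits

universe v u

namespace KenBrownAux

open CategoryTheory CategoryTheory.Limits

variable {C : Type u} [Category.{v} C] (M : ModelStruct C)

/-- A map with the left lifting property against all acyclic fibrations is a cofibration. -/
theorem cof_of_llp {X Y : C} (i : X ⟶ Y)
    (h : ∀ {W Z : C} (p : W ⟶ Z), M.Fib p → M.W p → HasLiftingProperty i p) :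
    M.Cof i := by
  obtain ⟨Z, j, p, hj, hwp, hfp, hfac⟩ := M.fact₁ i
  haveI := h p hfp hwp
  have sq : CommSq j i p (𝟙 Y) := ⟨by simp [hfac]⟩
  exact M.cof_retract i j (𝟙 X) (𝟙 X) sq.lift p (by simp) sq.fac_right
    (by simp [sq.fac_left]) (by simp [hfac]) hj

theorem cof_comp {X Y Z : C} (i : X ⟶ Y) (j : Y ⟶ Z) (hi : M.Cof i) (hj : M.Cof j) :
    M.Cof (i ≫ j) := by
  apply cof_of_llp
  intro W Z' p hfp hwp
  haveI := M.lift_cof_trivFib i p hi hfp hwp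
  haveI := M.lift_cof_trivFib j p hj hfp hwp
  infer_instance

variable [HasInitial C]

theorem cof_inl {A B : C} [HasBinaryCoproduct A B] (hB : M.Cofibrant B) :
    M.Cof (coprod.inl : A ⟶ A ⨿ B) := by
  apply cof_of_llp
  intro W Z p hfp hwp
  haveI := M.lift_cof_trivFib (initial.to B) p hB hfp hwp
  constructor
  intro u v sq
  have sqB : CommSq (initial.to W) (initial.to B) p (coprod.inr ≫ v) :=
    ⟨initial.hom_ext _ _⟩
  exact ⟨⟨⟨coprod.desc u sqB.lift, by simp [coprod.inl_desc, coprod.inr_desc], by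
    apply coprod.hom_ext
    · simpa [coprod.inl_desc, coprod.inr_desc] using sq.w
    · simpa [coprod.inl_desc, coprod.inr_desc] using sqB.fac_right⟩⟩⟩

theorem cof_inr {A B : C} [HasBinaryCoproduct A B] (hA : M.Cofibrant A) :
    M.Cof (coprod.inr : B ⟶ A ⨿ B) := by
  apply cof_of_llp
  intro W Z p hfp hwp
  haveI := M.lift_cof_trivFib (initial.to A) p hA hfp hwp
  constructor
  intro u v sq
  have sqA : CommSq (initial.to W) (initial.to A) p (coprod.inl ≫ v) :=
    ⟨initial.hom_ext _ _⟩
  exact ⟨⟨⟨coprod.desc sqA.lift u, by simp [coprod.inl_desc, coprod.inr_desc], by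
    apply coprod.hom_ext
    · simpa [coprod.inl_desc, coprod.inr_desc] using sqA.fac_right
    · simpa [coprod.inl_desc, coprod.inr_desc] using sq.w⟩⟩⟩

end KenBrownAux

/-- **Ken Brown's lemma.**
Let `C` be a model category (with its initial object, so that cofibrancy makes
sense) and `D` a category equipped with a class `WD` of weak equivalences
satisfying the two-out-of-three property.  If a functor `F : C ⥤ D` sends acyclic
cofibrations between cofibrant objects to weak equivalences, then `F` sends all
weak equivalences between cofibrant objects to weak equivalences. -/
theorem ken_brown_lemma
    {C : Type u} [Category.{v} C] {D : Type u} [Category.{v} D]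
    [HasInitial C] [HasColimits C]
    (M : ModelStruct C)
    (WD : MorphismProperty D)
    (hWD_comp : ∀ {X Y Z : D} (f : X ⟶ Y) (g : Y ⟶ Z), WD f → WD g → WD (f ≫ g))
    (hWD_cancel_left : ∀ {X Y Z : D} (f : X ⟶ Y) (g : Y ⟶ Z), WD f → WD (f ≫ g) → WD g)
    (hWD_cancel_right : ∀ {X Y Z : D} (f : X ⟶ Y) (g : Y ⟶ Z), WD g → WD (f ≫ g) → WD f)
    (F : C ⥤ D)
    (hF : ∀ {A B : C} (i : A ⟶ B), M.Cofibrant A → M.Cofibrant B →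
      M.Cof i → M.W i → WD (F.map i)) :
    ∀ {A B : C} (f : A ⟶ B), M.Cofibrant A → M.Cofibrant B → M.W f →
      WD (F.map f) := by
  intro A B f hA hB hf
  -- factor the fold map (f, id) : A ⊔ B ⟶ B
  obtain ⟨Z, q, p, hq, hwp, hfp, hfac⟩ := M.fact₁ (coprod.desc f (𝟙 B))
  -- the two inclusions composed with q are cofibrations
  have hinlq : M.Cof (coprod.inl ≫ q) :=
    KenBrownAux.cof_comp M _ _ (KenBrownAux.cof_inl M hB) hq
  have hinrq : M.Cof (coprod.inr ≫ q) :=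
    KenBrownAux.cof_comp M _ _ (KenBrownAux.cof_inr M hA) hq
  -- Z is cofibrant
  have hZ : M.Cofibrant Z := by
    have := KenBrownAux.cof_comp M (initial.to A) (coprod.inl ≫ q) hA hinlq
    rwa [show initial.to A ≫ (coprod.inl ≫ q) = initial.to Z from initial.hom_ext _ _] at this
  -- the two compositions are weak equivalences
  have hw1 : M.W (coprod.inl ≫ q) := by
    apply M.w_cancel_right _ p hwp
    rw [Category.assoc, hfac]
    simpa [coprod.inl_desc, coprod.inr_desc] using hf
  have hw2 : M.W (coprod.inr ≫ q) := by
    apply M.w_cancel_right _ p hwp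
    rw [Category.assoc, hfac]
    simpa [coprod.inl_desc, coprod.inr_desc] using M.w_id B
  have h1 : WD (F.map (coprod.inl ≫ q)) := hF _ hA hZ hinlq hw1
  have h2 : WD (F.map (coprod.inr ≫ q)) := hF _ hB hZ hinrq hw2
  have hid : WD (F.map (𝟙 B)) := hF _ hB hB (M.cof_id B) (M.w_id B)
  have hp : WD (F.map p) := by
    apply hWD_cancel_left _ _ h2
    rw [← F.map_comp]
    have : (coprod.inr ≫ q) ≫ p = 𝟙 B := by rw [Category.assoc, hfac]; simp [coprod.inl_desc, coprod.inr_desc]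
    rwa [this]
  have hff : F.map f = F.map (coprod.inl ≫ q) ≫ F.map p := by
    rw [← F.map_comp]
    congr 1
    rw [Category.assoc, hfac]
    simp [coprod.inl_desc, coprod.inr_desc]
  rw [hff]
  exact hWD_comp _ _ h1 hp
end

section
/- Let C be a symmetric monoidal category with coequalizers, S a commutative monoid in C, and F : C → D a strong symmetric monoidal functor preserving coequalizers. Then for S-modules M, N there is a natural isomorphism F(M ⊗_S N) ≅ F(M) ⊗_{F(S)} F(N), where F(S) is the commutative monoid in D induced by the strong monoidal structure. -/
open CategoryTheory CategoryTheory.Limits MonoidalCategory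
open CategoryTheory.Functor.LaxMonoidal

universe v₁ v₂ u₁ u₂

variable {C : Type u₁} [Category.{v₁} C] [MonoidalCategory C] [SymmetricCategory C]
  [HasCoequalizers C]

/-- The right action of a commutative monoid `S` on a left `S`-module, obtained
from the left action via the braiding. -/
noncomputable def rightAct {S : Mon C} (M : Mod C S.X) : M.X ⊗ S.X ⟶ M.X :=
  (β_ M.X S.X).hom ≫ (ModObj.smul (M := S.X) (X := M.X) : S.X ⊗ M.X ⟶ M.X)

/-- The first of the two parallel maps `M ⊗ S ⊗ N ⇉ M ⊗ N` (acting on `M`). -/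
noncomputable def relTensorLeft {S : Mon C} (M N : Mod C S.X) :
    (M.X ⊗ S.X) ⊗ N.X ⟶ M.X ⊗ N.X :=
  rightAct M ▷ N.X

/-- The second of the two parallel maps `M ⊗ S ⊗ N ⇉ M ⊗ N` (acting on `N`). -/
noncomputable def relTensorRight {S : Mon C} (M N : Mod C S.X) :
    (M.X ⊗ S.X) ⊗ N.X ⟶ M.X ⊗ N.X :=
  (α_ M.X S.X N.X).hom ≫ (M.X ◁ (ModObj.smul (M := S.X) (X := N.X) : S.X ⊗ N.X ⟶ N.X))

/-- The relative tensor product `M ⊗_S N` of modules over a commutative monoid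
`S`, defined as the coequalizer of the two actions `M ⊗ S ⊗ N ⇉ M ⊗ N`. -/
noncomputable def relTensor {S : Mon C} (M N : Mod C S.X) : C :=
  coequalizer (relTensorLeft M N) (relTensorRight M N)

variable {D : Type u₂} [Category.{v₂} D] [MonoidalCategory D] [HasCoequalizers D]

/-- **Strong symmetric monoidal functors preserve relative tensor products.**
Let `C` be a symmetric monoidal category with coequalizers, `S` a commutative
monoid in `C`, and `F : C ⥤ D` a strong monoidal functor preserving coequalizers.
For `S`-modules `M, N` there is an isomorphism
`F(M ⊗_S N) ≅ F(M) ⊗_{F(S)} F(N)`, where the right-hand side is the coequalizer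
in `D` of the two `F(S)`-actions on `F(M) ⊗ F(N)` induced by the strong monoidal
structure of `F`. -/
theorem monoidal_functor_preserves_relative_tensor
    (F : C ⥤ D) [F.Monoidal]
    [PreservesColimitsOfShape WalkingParallelPair F]
    (S : Mon C) (hcomm : (β_ S.X S.X).hom ≫ MonObj.mul (X := S.X) = MonObj.mul (X := S.X))
    (M N : Mod C S.X) :
    Nonempty
      (F.obj (relTensor M N) ≅
        coequalizer
          (((μ F M.X S.X ≫ F.map (rightAct M)) ▷ F.obj N.X :
              (F.obj M.X ⊗ F.obj S.X) ⊗ F.obj N.X ⟶ F.obj M.X ⊗ F.obj N.X))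
          ((α_ (F.obj M.X) (F.obj S.X) (F.obj N.X)).hom ≫
            (F.obj M.X ◁ (μ F S.X N.X ≫ F.map (ModObj.smul (M := S.X) (X := N.X) : S.X ⊗ N.X ⟶ N.X))))) := by
  refine ⟨(PreservesCoequalizer.iso F (relTensorLeft M N) (relTensorRight M N)).symm ≪≫
    HasColimit.isoOfNatIso (parallelPair.ext
      ((whiskerRightIso (Functor.Monoidal.μIso F M.X S.X) (F.obj N.X) ≪≫
        Functor.Monoidal.μIso F (M.X ⊗ S.X) N.X).symm)
      ((Functor.Monoidal.μIso F M.X N.X).symm) ?_ ?_)⟩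
  · simp [relTensorLeft, Functor.Monoidal.μIso, ← μ_natural_left_assoc]
  · simp [relTensorRight, Functor.Monoidal.μIso, ← μ_natural_right,
      ← Functor.LaxMonoidal.associativity_assoc]
end
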